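/- Let b ≥ 0 be an integer and let t be a b-astray good edge labeling of K_n (n ≥ 2). Then t is (b²n/2)-almost supermagic; that is, for all vertices u, v of K_n, 2·|s(t,u) − s(t,v)| ≤ b²·n. -/
import Mathlib


open Finset

namespace Swap

noncomputable section
open scoped Classical

def eps (n : ℕ) : ℕ := n * (n - 1) / 2

def incEdges (n : ℕ) (v : Fin n) : Finset (Sym2 (Fin n)) :=
  Finset.univ.filter fun e => v ∈ e ∧ ¬ e.IsDiag

def IsEdgeLabeling (n : ℕ) (t : Sym2 (Fin n) → ℕ) : Prop :=
  Set.BijOn t {e : Sym2 (Fin n) | ¬ e.IsDiag} (Set.Icc 1 (eps n))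

def labelSum (n : ℕ) (t : Sym2 (Fin n) → ℕ) (v : Fin n) : ℤ :=
  ∑ e ∈ incEdges n v, (t e : ℤ)

def labelSet (n : ℕ) (t : Sym2 (Fin n) → ℕ) (v : Fin n) : Finset ℕ :=
  (incEdges n v).image t

def AlmostSupermagic (n α : ℕ) (t : Sym2 (Fin n) → ℕ) : Prop :=
  IsEdgeLabeling n t ∧ ∀ u v : Fin n, |labelSum n t u - labelSum n t v| ≤ (α : ℤ)

def IsPSwap (n p : ℕ) (t t' : Sym2 (Fin n) → ℕ) : Prop :=
  IsEdgeLabeling n t' ∧ ∀ e : Sym2 (Fin n), ¬ e.IsDiag → |(t' e : ℤ) - (t e : ℤ)| ≤ (p : ℤ)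

def robustness (n p : ℕ) (t : Sym2 (Fin n) → ℕ) : ℕ :=
  sSup {d : ℕ | ∃ t' : Sym2 (Fin n) → ℕ, IsPSwap n p t t' ∧
    ∃ u v : Fin n, u ≠ v ∧ (d : ℤ) = |labelSum n t' u - labelSum n t' v|}

def Uplus (n p : ℕ) (t : Sym2 (Fin n) → ℕ) (v : Fin n) : Finset (Sym2 (Fin n)) :=
  (incEdges n v).filter fun e => ∃ e' ∈ incEdges n v, t e' = t e + p

def Uminus (n p : ℕ) (t : Sym2 (Fin n) → ℕ) (v : Fin n) : Finset (Sym2 (Fin n)) :=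
  (incEdges n v).filter fun e => ∃ e' ∈ incEdges n v, t e' + p = t e

def badPairsI (n p : ℕ) (t : Sym2 (Fin n) → ℕ) (u v : Fin n) :
    Finset (Sym2 (Sym2 (Fin n))) :=
  Finset.univ.filter fun P => ∃ e₁ e₂ : Sym2 (Fin n), P = s(e₁, e₂) ∧
    ¬ e₁.IsDiag ∧ ¬ e₂.IsDiag ∧ u ∈ e₁ ∧ v ∈ e₂ ∧ ((t e₁ : ℤ) - (t e₂ : ℤ)).natAbs = p

def badPairsII (n p : ℕ) (t : Sym2 (Fin n) → ℕ) (u v : Fin n) :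
    Finset (Sym2 (Sym2 (Fin n))) :=
  Finset.univ.filter fun P => ∃ e₁ e₂ : Sym2 (Fin n), P = s(e₁, e₂) ∧
    ¬ e₁.IsDiag ∧ ¬ e₂.IsDiag ∧ u ∈ e₁ ∧ v ∈ e₂ ∧ ((t e₁ : ℤ) - (t e₂ : ℤ)).natAbs = 2 * p

def badPairs (n p : ℕ) (t : Sym2 (Fin n) → ℕ) (u v : Fin n) :
    Finset (Sym2 (Sym2 (Fin n))) :=
  badPairsI n p t u v ∪ badPairsII n p t u v

def IsAP1 (I : Finset ℕ) : Prop := ∃ a b : ℕ, a ≤ b ∧ I = Finset.Icc a b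

def SetHasType (p m ℓ : ℕ) (S : Finset ℕ) : Prop :=
  ∃ 𝒜 : Finset (Finset ℕ), 𝒜.card ≤ m ∧
    (∀ I ∈ 𝒜, IsAP1 I ∧ I ⊆ S ∧ 2 * p ≤ I.card) ∧
    (𝒜 : Set (Finset ℕ)).PairwiseDisjoint id ∧
    ℓ ≤ ∑ I ∈ 𝒜, I.card

def LabelingHasType (n p m ℓ : ℕ) (t : Sym2 (Fin n) → ℕ) : Prop :=
  ∀ v : Fin n, SetHasType p m ℓ (labelSet n t v)

def AstrayGood (n b : ℕ) (t : Sym2 (Fin n) → ℕ) : Prop :=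
  IsEdgeLabeling n t ∧
  ∃ A : Finset (Sym2 (Fin n)), (∀ e ∈ A, ¬ e.IsDiag) ∧
    A.card % 2 = eps n % 2 ∧
    A.image t = Finset.Icc ((eps n - A.card) / 2 + 1) ((eps n + A.card) / 2) ∧
    ∀ v : Fin n,
      (incEdges n v ∩ A).card ≤ b ∧
      ((incEdges n v).filter fun e => t e ≤ (eps n - A.card) / 2).card
        = ((incEdges n v).filter fun e => (eps n + A.card) / 2 < t e).card ∧
      2 * ∑ e ∈ incEdges n v \ A, t e = (incEdges n v \ A).card * (eps n + 1)

def Admissible (p : ℕ → ℕ) : Prop :=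
  Filter.Tendsto (fun n => (p n : ℝ) / n) Filter.atTop (nhds 0) ∧
  Filter.Tendsto p Filter.atTop Filter.atTop

end
end Swap


section Aux
open Swap

lemma mem_incEdges' {n : ℕ} {v : Fin n} {e : Sym2 (Fin n)} :
    e ∈ incEdges n v ↔ v ∈ e ∧ ¬ e.IsDiag := by
  simp [incEdges]

lemma card_incEdges' (n : ℕ) (hn : 1 ≤ n) (v : Fin n) :
    (incEdges n v).card = n - 1 := by
  classical
  have heq : incEdges n v = (Finset.univ.erase v).image (fun w => s(v, w)) := by
    ext e
    rw [mem_incEdges']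
    constructor
    · rintro ⟨hv, hd⟩
      induction e with
      | _ x y =>
        rw [Sym2.mem_iff] at hv
        rw [Sym2.isDiag_iff_proj_eq] at hd
        rcases hv with rfl | rfl
        · exact Finset.mem_image.2 ⟨y, by simp [Ne.symm hd], rfl⟩
        · exact Finset.mem_image.2 ⟨x, by simp [hd], by rw [Sym2.eq_swap]⟩
    · rintro h
      rcases Finset.mem_image.1 h with ⟨w, hw, rfl⟩
      have hwv : w ≠ v := (Finset.mem_erase.1 hw).1
      refine ⟨Sym2.mem_mk_left v w, ?_⟩
      rw [Sym2.isDiag_iff_proj_eq]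
      exact fun h => hwv h.symm
  rw [heq, Finset.card_image_of_injOn, Finset.card_erase_of_mem (Finset.mem_univ v),
    Finset.card_univ, Fintype.card_fin]
  intro x _ y _ hxy
  exact Sym2.congr_right.1 hxy

lemma card_mem_sym2 {n : ℕ} (e : Sym2 (Fin n)) (hd : ¬ e.IsDiag) :
    (Finset.univ.filter (fun v : Fin n => v ∈ e)).card = 2 := by
  classical
  induction e with
  | _ x y =>
    rw [Sym2.isDiag_iff_proj_eq] at hd
    have : (Finset.univ.filter (fun v : Fin n => v ∈ s(x, y))) = {x, y} := by
      ext z; simp [Sym2.mem_iff]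
    rw [this, Finset.card_insert_of_notMem (by simp [hd]), Finset.card_singleton]

lemma double_count {n : ℕ} (A : Finset (Sym2 (Fin n))) (hA : ∀ e ∈ A, ¬ e.IsDiag) :
    ∑ v : Fin n, ((incEdges n v ∩ A).card) = 2 * A.card := by
  classical
  have h1 : ∀ v : Fin n, incEdges n v ∩ A = A.filter (fun e => v ∈ e) := by
    intro v
    ext e
    simp only [Finset.mem_inter, mem_incEdges', Finset.mem_filter]
    constructor
    · rintro ⟨⟨h1, _⟩, h2⟩; exact ⟨h2, h1⟩
    · rintro ⟨h1, h2⟩; exact ⟨⟨h2, hA e h1⟩, h1⟩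
  calc ∑ v : Fin n, ((incEdges n v ∩ A).card)
      = ∑ v : Fin n, ∑ e ∈ A, (if v ∈ e then 1 else 0) := by
        simp only [h1, Finset.card_filter]
    _ = ∑ e ∈ A, ∑ v : Fin n, (if v ∈ e then 1 else 0) := Finset.sum_comm
    _ = ∑ e ∈ A, 2 := by
        refine Finset.sum_congr rfl fun e he => ?_
        rw [← Finset.card_filter]
        exact card_mem_sym2 e (hA e he)
    _ = 2 * A.card := by rw [Finset.sum_const, smul_eq_mul, mul_comm]

end Aux

theorem stmt13 (n b : ℕ) (hn : 2 ≤ n)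
    (t : Sym2 (Fin n) → ℕ) (ht : Swap.AstrayGood n b t) :
    ∀ u v : Fin n,
      2 * |Swap.labelSum n t u - Swap.labelSum n t v| ≤ (b : ℤ) ^ 2 * n := by
  classical
  obtain ⟨hbij, A, hA, hpar, himg, hcond⟩ := ht
  set ε := Swap.eps n with hε
  set a := A.card with ha
  -- a ≤ ε
  have hinj : Set.InjOn t {e : Sym2 (Fin n) | ¬ e.IsDiag} := hbij.injOn
  have hcardimg : (A.image t).card = a := by
    apply Finset.card_image_of_injOn
    intro x hx y hy hxy
    exact hinj (hA x hx) (hA y hy) hxy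
  have haeps : a ≤ ε := by
    have hsub : A.image t ⊆ Finset.Icc 1 ε := by
      intro x hx
      rcases Finset.mem_image.1 hx with ⟨e, he, rfl⟩
      have := hbij.mapsTo (hA e he)
      simp only [Set.mem_Icc] at this
      exact Finset.mem_Icc.2 this
    have := Finset.card_le_card hsub
    rwa [hcardimg, Nat.card_Icc] at this
  have hlo : 2 * ((ε - a) / 2) = ε - a := by omega
  have hhi : 2 * ((ε + a) / 2) = ε + a := by omega
  -- per-edge bound
  have hedge : ∀ e ∈ A, |2 * (t e : ℤ) - (ε + 1)| ≤ (a : ℤ) := by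
    intro e he
    have hmem : t e ∈ A.image t := Finset.mem_image_of_mem t he
    rw [himg, Finset.mem_Icc] at hmem
    rw [abs_le]
    omega
  -- key identity
  have hkey : ∀ v : Fin n, 2 * Swap.labelSum n t v
      = ((n : ℤ) - 1) * (ε + 1)
        + ∑ e ∈ Swap.incEdges n v ∩ A, (2 * (t e : ℤ) - (ε + 1)) := by
    intro v
    have hsubset : Swap.incEdges n v ∩ A ⊆ Swap.incEdges n v := Finset.inter_subset_left
    have hsplit : ∑ e ∈ Swap.incEdges n v \ (Swap.incEdges n v ∩ A), (t e : ℤ)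
        + ∑ e ∈ Swap.incEdges n v ∩ A, (t e : ℤ) = Swap.labelSum n t v :=
      Finset.sum_sdiff hsubset
    have hsd : Swap.incEdges n v \ (Swap.incEdges n v ∩ A) = Swap.incEdges n v \ A :=
      Finset.sdiff_inter_self_left _ _
    rw [hsd] at hsplit
    have h3 := (hcond v).2.2
    have hcards : (Swap.incEdges n v \ A).card + (Swap.incEdges n v ∩ A).card
        = (Swap.incEdges n v).card := Finset.card_sdiff_add_card_inter _ _
    rw [card_incEdges' n (by omega) v] at hcards
    -- cast condition 3 to ℤ
    have h3' : 2 * ∑ e ∈ Swap.incEdges n v \ A, (t e : ℤ)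
        = ((Swap.incEdges n v \ A).card : ℤ) * ((ε : ℤ) + 1) := by
      have := congrArg (fun x : ℕ => (x : ℤ)) h3
      push_cast at this
      linarith
    have hcv : ((Swap.incEdges n v ∩ A).card : ℤ)
        = (n : ℤ) - 1 - ((Swap.incEdges n v \ A).card : ℤ) := by
      have h2 : (1 : ℕ) ≤ n := by omega
      omega
    rw [Finset.sum_sub_distrib, Finset.sum_const, ← Finset.mul_sum]
    rw [← hsplit]
    rw [mul_add, h3']
    simp only [nsmul_eq_mul]
    rw [hcv]
    ring
  intro u v
  have hcu := (hcond u).1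
  have hcv := (hcond v).1
  -- bound on the sums
  have hbound : ∀ w : Fin n,
      |∑ e ∈ Swap.incEdges n w ∩ A, (2 * (t e : ℤ) - (ε + 1))| ≤ (b : ℤ) * a := by
    intro w
    calc |∑ e ∈ Swap.incEdges n w ∩ A, (2 * (t e : ℤ) - (ε + 1))|
        ≤ ∑ e ∈ Swap.incEdges n w ∩ A, |2 * (t e : ℤ) - (ε + 1)| :=
          Finset.abs_sum_le_sum_abs _ _
      _ ≤ (Swap.incEdges n w ∩ A).card • (a : ℤ) :=
          Finset.sum_le_card_nsmul _ _ _ (fun e he => hedge e (Finset.mem_inter.1 he).2)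
      _ ≤ (b : ℤ) * a := by
          rw [nsmul_eq_mul]
          have := (hcond w).1
          have h0 : (0:ℤ) ≤ (a:ℤ) := by positivity
          exact mul_le_mul_of_nonneg_right (by exact_mod_cast this) h0
  -- 2a ≤ b n
  have hdc := double_count A hA
  have h2a : 2 * a ≤ b * n := by
    calc 2 * a = ∑ w : Fin n, ((Swap.incEdges n w ∩ A).card) := hdc.symm
      _ ≤ ∑ _w : Fin n, b := Finset.sum_le_sum (fun w _ => (hcond w).1)
      _ = b * n := by simp [mul_comm]
  have h1 := hkey u
  have h2 := hkey v
  have : 2 * (Swap.labelSum n t u - Swap.labelSum n t v)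
      = ∑ e ∈ Swap.incEdges n u ∩ A, (2 * (t e : ℤ) - (ε + 1))
        - ∑ e ∈ Swap.incEdges n v ∩ A, (2 * (t e : ℤ) - (ε + 1)) := by
    linarith
  have habs : 2 * |Swap.labelSum n t u - Swap.labelSum n t v|
      = |2 * (Swap.labelSum n t u - Swap.labelSum n t v)| := by
    rw [abs_mul]; simp
  rw [habs, this]
  calc |∑ e ∈ Swap.incEdges n u ∩ A, (2 * (t e : ℤ) - (ε + 1))
        - ∑ e ∈ Swap.incEdges n v ∩ A, (2 * (t e : ℤ) - (ε + 1))|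
      ≤ |∑ e ∈ Swap.incEdges n u ∩ A, (2 * (t e : ℤ) - (ε + 1))|
        + |∑ e ∈ Swap.incEdges n v ∩ A, (2 * (t e : ℤ) - (ε + 1))| := abs_sub _ _
    _ ≤ (b : ℤ) * a + (b : ℤ) * a := add_le_add (hbound u) (hbound v)
    _ = (b : ℤ) * (2 * a) := by ring
    _ ≤ (b : ℤ) * (b * n) := by
        have h0 : (0:ℤ) ≤ (b:ℤ) := by positivity
        refine mul_le_mul_of_nonneg_left ?_ h0
        exact_mod_cast h2a
    _ = (b : ℤ) ^ 2 * n := by ring
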